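/- Let σ > 0, μ ∈ ℝ, λ > 0, and Y ~ N(μ, σ²). Let ST(t,λ) = t+λ if t ≤ −λ, 0 if −λ < t < λ, t−λ if t ≥ λ be the soft-thresholding map. Then E[(Y − μ) · ST(Y, λ)] = σ² · P(|Y| > λ). -/

import Mathlib

open MeasureTheory ProbabilityTheory

noncomputable section

/-- Soft-thresholding with threshold `λ`:
`softThresh(t, λ) = t + λ` if `t ≤ -λ`, `0` if `-λ < t < λ`, `t - λ` if `t ≥ λ`. -/
def softThresh (t lam : ℝ) : ℝ := if t ≤ -lam then t + lam else if t < lam then 0 else t - lam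

section SteinHelpers

open Real Filter Set Topology
open scoped NNReal ENNReal

lemma gauss_tendsto_atTop {b : ℝ} (hb : 0 < b) (m d C : ℝ) :
    Tendsto (fun t : ℝ => (t + d) * (C * rexp (-b * (t - m) ^ 2))) atTop (𝓝 0) := by
  have h0 : Tendsto (fun u : ℝ => rexp (-b * u ^ 2)) atTop (𝓝 0) := by
    have h1 : Tendsto (fun u : ℝ => b * u ^ 2) atTop atTop :=
      (tendsto_pow_atTop two_ne_zero).const_mul_atTop hb
    have := Real.tendsto_exp_neg_atTop_nhds_zero.comp h1
    exact this.congr fun u => by simp [Function.comp, neg_mul]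
  have h1 : Tendsto (fun u : ℝ => u * rexp (-b * u ^ 2)) atTop (𝓝 0) := by
    have hlim : Tendsto (fun x : ℝ => rexp (-(1/2) * x)) atTop (𝓝 0) := by
      have h1 : Tendsto (fun x : ℝ => (1/2 : ℝ) * x) atTop atTop :=
        tendsto_id.const_mul_atTop (by norm_num)
      have := Real.tendsto_exp_neg_atTop_nhds_zero.comp h1
      exact this.congr fun u => by simp [Function.comp, neg_mul]
    have ho := (rpow_mul_exp_neg_mul_sq_isLittleO_exp_neg hb 1).isBigO.trans_tendsto hlim
    refine ho.congr' ?_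
    filter_upwards [eventually_ge_atTop (0:ℝ)] with x hx
    rw [rpow_one]
  have hphi : Tendsto (fun u : ℝ => C * (u * rexp (-b * u ^ 2))
      + (C * (m + d)) * rexp (-b * u ^ 2)) atTop (𝓝 0) := by
    have := ((h1.const_mul C).add (h0.const_mul (C * (m + d))))
    simpa using this
  have hsub : Tendsto (fun t : ℝ => t - m) atTop atTop :=
    tendsto_atTop_add_const_right atTop (-m) tendsto_id
  have := hphi.comp hsub
  refine this.congr fun t => ?_
  simp only [Function.comp]
  ring

lemma gauss_tendsto_atBot {b : ℝ} (hb : 0 < b) (m d C : ℝ) :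
    Tendsto (fun t : ℝ => (t + d) * (C * rexp (-b * (t - m) ^ 2))) atBot (𝓝 0) := by
  have := (gauss_tendsto_atTop hb (-m) (-d) (-C)).comp tendsto_neg_atBot_atTop
  refine this.congr fun t => ?_
  simp only [Function.comp]
  have h : (-t - -m) ^ 2 = (t - m) ^ 2 := by ring
  rw [h]; ring

lemma integrable_poly_gauss {b : ℝ} (hb : 0 < b) (m p q r : ℝ) :
    Integrable (fun t : ℝ => (p * (t - m) ^ 2 + q * (t - m) + r) * rexp (-b * (t - m) ^ 2)) := by
  have h2 : Integrable (fun u : ℝ => u ^ 2 * rexp (-b * u ^ 2)) := by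
    have := integrable_rpow_mul_exp_neg_mul_sq hb (by norm_num : (-1:ℝ) < 2)
    simpa [Real.rpow_two] using this
  have h1 : Integrable (fun u : ℝ => u * rexp (-b * u ^ 2)) :=
    integrable_mul_exp_neg_mul_sq hb
  have h0 : Integrable (fun u : ℝ => rexp (-b * u ^ 2)) := integrable_exp_neg_mul_sq hb
  have base : Integrable (fun u : ℝ => (p * u ^ 2 + q * u + r) * rexp (-b * u ^ 2)) := by
    have := ((h2.const_mul p).add (h1.const_mul q)).add (h0.const_mul r)
    refine this.congr ?_
    filter_upwards with u
    simp only [Pi.add_apply]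
    ring
  exact base.comp_sub_right m

lemma gauss_hasDerivAt {σ : ℝ} (hσ : 0 < σ) (m C c x : ℝ) :
    HasDerivAt (fun t : ℝ => -σ^2 * ((t - c) * (C * rexp (-(2*σ^2)⁻¹ * (t - m)^2))))
      ((x - m) * ((x - c) * (C * rexp (-(2*σ^2)⁻¹ * (x - m)^2)))
        - σ^2 * (C * rexp (-(2*σ^2)⁻¹ * (x - m)^2))) x := by
  have hσ2 : (σ:ℝ)^2 ≠ 0 := by positivity
  have h1 : HasDerivAt (fun t : ℝ => -(2*σ^2)⁻¹ * (t - m)^2)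
      (-(2*σ^2)⁻¹ * (2 * (x - m))) x := by
    have h := (((hasDerivAt_id x).sub_const m).pow 2).const_mul (-(2*σ^2)⁻¹ : ℝ)
    refine h.congr_deriv ?_
    simp only [id_eq]
    ring
  have h2 : HasDerivAt (fun t : ℝ => C * rexp (-(2*σ^2)⁻¹ * (t - m)^2))
      (C * (rexp (-(2*σ^2)⁻¹ * (x - m)^2) * (-(2*σ^2)⁻¹ * (2 * (x - m))))) x := by
    exact (h1.exp).const_mul C
  have h3 := (((hasDerivAt_id x).sub_const c).mul h2).const_mul (-σ^2 : ℝ)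
  refine h3.congr_deriv ?_
  simp only [id_eq]
  field_simp
  ring

lemma integrable_gauss_expl {σ : ℝ} (hσ : 0 < σ) (m C : ℝ) :
    Integrable (fun t : ℝ => C * rexp (-(2*σ^2)⁻¹ * (t - m)^2)) := by
  have hb : (0:ℝ) < (2*σ^2)⁻¹ := by positivity
  exact ((integrable_exp_neg_mul_sq hb).comp_sub_right m).const_mul C

lemma integrable_quad_gauss {σ : ℝ} (hσ : 0 < σ) (m C c : ℝ) :
    Integrable (fun t : ℝ => (t - m) * ((t - c) * (C * rexp (-(2*σ^2)⁻¹ * (t - m)^2)))) := by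
  have hb : (0:ℝ) < (2*σ^2)⁻¹ := by positivity
  refine (integrable_poly_gauss hb m C (C * (m - c)) 0).congr ?_
  filter_upwards with t
  ring

lemma ftc_gauss_Ioi {σ : ℝ} (hσ : 0 < σ) (m C a : ℝ) :
    ∫ t in Set.Ioi a, (t - m) * ((t - a) * (C * rexp (-(2*σ^2)⁻¹ * (t - m)^2)))
      = σ^2 * ∫ t in Set.Ioi a, C * rexp (-(2*σ^2)⁻¹ * (t - m)^2) := by
  have hb : (0:ℝ) < (2*σ^2)⁻¹ := by positivity
  have hg := integrable_gauss_expl hσ m C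
  have hq := integrable_quad_gauss hσ m C a
  have htop : Tendsto (fun t : ℝ => -σ^2 * ((t - a) * (C * rexp (-(2*σ^2)⁻¹ * (t - m)^2))))
      atTop (𝓝 0) := by
    have := gauss_tendsto_atTop hb m (-a) (-(σ^2 * C))
    refine this.congr fun t => ?_
    ring
  have key := integral_Ioi_of_hasDerivAt_of_tendsto' (a := a) (f' := fun x =>
      (x - m) * ((x - a) * (C * rexp (-(2*σ^2)⁻¹ * (x - m)^2)))
        - σ^2 * (C * rexp (-(2*σ^2)⁻¹ * (x - m)^2)))
    (fun x _ => gauss_hasDerivAt hσ m C a x)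
    ((hq.sub (hg.const_mul (σ^2))).integrableOn) htop
  simp only [sub_self, zero_mul, mul_zero, zero_sub, neg_neg, neg_zero] at key
  rw [integral_sub hq.integrableOn ((hg.const_mul (σ^2)).integrableOn)] at key
  rw [integral_const_mul] at key
  linarith
  -- key : ∫ q - σ^2 * ∫ g = 0

lemma ftc_gauss_Iic {σ : ℝ} (hσ : 0 < σ) (m C a : ℝ) :
    ∫ t in Set.Iic a, (t - m) * ((t - a) * (C * rexp (-(2*σ^2)⁻¹ * (t - m)^2)))
      = σ^2 * ∫ t in Set.Iic a, C * rexp (-(2*σ^2)⁻¹ * (t - m)^2) := by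
  have hb : (0:ℝ) < (2*σ^2)⁻¹ := by positivity
  have hg := integrable_gauss_expl hσ m C
  have hq := integrable_quad_gauss hσ m C a
  have hbot : Tendsto (fun t : ℝ => -σ^2 * ((t - a) * (C * rexp (-(2*σ^2)⁻¹ * (t - m)^2))))
      atBot (𝓝 0) := by
    have := gauss_tendsto_atBot hb m (-a) (-(σ^2 * C))
    refine this.congr fun t => ?_
    ring
  have key := integral_Iic_of_hasDerivAt_of_tendsto' (a := a) (f' := fun x =>
      (x - m) * ((x - a) * (C * rexp (-(2*σ^2)⁻¹ * (x - m)^2)))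
        - σ^2 * (C * rexp (-(2*σ^2)⁻¹ * (x - m)^2)))
    (fun x _ => gauss_hasDerivAt hσ m C a x)
    ((hq.sub (hg.const_mul (σ^2))).integrableOn) hbot
  simp only [sub_self, zero_mul, mul_zero, sub_zero, neg_zero] at key
  rw [integral_sub hq.integrableOn ((hg.const_mul (σ^2)).integrableOn)] at key
  rw [integral_const_mul] at key
  linarith


/-- **Stein identity for soft-thresholding.**  For `Y ~ N(μ, σ²)` and `λ > 0`,
`E[(Y - μ) · softThresh(Y, λ)] = σ² · P(|Y| > λ)`. -/
theorem stein_identity_soft_thresholding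
    (σ : ℝ) (hσ : 0 < σ) (m : ℝ) (lam : ℝ) (hlam : 0 < lam) :
    (∫ t : ℝ, (t - m) * softThresh t lam ∂(gaussianReal m ⟨σ ^ 2, sq_nonneg σ⟩))
      = σ ^ 2 * ((gaussianReal m ⟨σ ^ 2, sq_nonneg σ⟩) {t : ℝ | lam < |t|}).toReal := by
  set V : ℝ≥0 := ⟨σ ^ 2, sq_nonneg σ⟩ with hVdef
  have hσ2 : (0:ℝ) < σ ^ 2 := by positivity
  have hVc : (V : ℝ) = σ ^ 2 := rfl
  have hV0 : V ≠ 0 := by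
    intro h
    rw [← NNReal.coe_eq_zero, hVc] at h
    exact hσ2.ne' h
  set C : ℝ := (Real.sqrt (2 * Real.pi * σ ^ 2))⁻¹ with hCdef
  set G : ℝ → ℝ := fun t => C * rexp (-(2*σ^2)⁻¹ * (t - m)^2) with hGdef
  have hfg : gaussianPDFReal m V = G := by
    ext t
    rw [gaussianPDFReal, hGdef, hCdef, hVc]
    congr 1
    rw [neg_div, div_eq_inv_mul, ← neg_mul]
  -- rewrite the right-hand side measure as an integral
  have hset : {t : ℝ | lam < |t|} = Iio (-lam) ∪ Ioi lam := by
    ext t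
    simp only [mem_setOf_eq, mem_union, mem_Iio, mem_Ioi, lt_abs]
    rw [lt_neg, or_comm]
  have hdisj : Disjoint (Iio (-lam) : Set ℝ) (Ioi lam) := by
    refine Set.disjoint_left.mpr fun t h1 h2 => ?_
    simp only [mem_Iio] at h1
    simp only [mem_Ioi] at h2
    linarith
  rw [gaussianReal_apply_eq_integral _ hV0, hset,
    ENNReal.toReal_ofReal (setIntegral_nonneg (measurableSet_Iio.union measurableSet_Ioi)
      (fun t _ => gaussianPDFReal_nonneg m V t)),
    setIntegral_union hdisj measurableSet_Ioi
      (integrable_gaussianPDFReal m V).integrableOn (integrable_gaussianPDFReal m V).integrableOn]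
  have hIio : ∫ t in Iio (-lam), gaussianPDFReal m V t = ∫ t in Iic (-lam), gaussianPDFReal m V t :=
    setIntegral_congr_set Iio_ae_eq_Iic
  rw [hIio, hfg]
  -- rewrite the gaussian integral as a Lebesgue integral against the density
  rw [gaussianReal_of_var_ne_zero _ hV0]
  have hmeas : Measurable fun x => (gaussianPDFReal m V x).toNNReal :=
    (measurable_gaussianPDFReal m V).real_toNNReal
  have hwd : (volume : Measure ℝ).withDensity (gaussianPDF m V)
      = volume.withDensity (fun x => ((gaussianPDFReal m V x).toNNReal : ℝ≥0∞)) := rfl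
  rw [hwd, integral_withDensity_eq_integral_smul hmeas]
  -- pointwise identity splitting the integrand
  have hsplit : ∀ t : ℝ, (gaussianPDFReal m V t).toNNReal • ((t - m) * softThresh t lam)
      = (Iic (-lam)).indicator (fun t => (t - m) * ((t - (-lam)) * G t)) t
        + (Ioi lam).indicator (fun t => (t - m) * ((t - lam) * G t)) t := by
    intro t
    have hnn := gaussianPDFReal_nonneg m V t
    rw [NNReal.smul_def, Real.coe_toNNReal _ hnn, smul_eq_mul, hfg]
    simp only [softThresh, indicator_apply, mem_Iic, mem_Ioi]
    split_ifs with h1 h2 h3 h4 h5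
    · exfalso; linarith
    · ring
    · exfalso; linarith
    · ring
    · ring
    · have h : t - lam = 0 := by linarith
      rw [h]; ring
  simp_rw [hsplit]
  have hq1 : Integrable (fun t : ℝ => (t - m) * ((t - (-lam)) * G t)) :=
    integrable_quad_gauss hσ m C (-lam)
  have hq2 : Integrable (fun t : ℝ => (t - m) * ((t - lam) * G t)) :=
    integrable_quad_gauss hσ m C lam
  rw [integral_add
    (hq1.integrableOn.integrable_indicator measurableSet_Iic)
    (hq2.integrableOn.integrable_indicator measurableSet_Ioi),
    integral_indicator measurableSet_Iic, integral_indicator measurableSet_Ioi]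
  rw [show (∫ t in Iic (-lam), (t - m) * ((t - (-lam)) * G t))
      = σ^2 * ∫ t in Iic (-lam), C * rexp (-(2*σ^2)⁻¹ * (t - m)^2) from
      ftc_gauss_Iic hσ m C (-lam),
    show (∫ t in Ioi lam, (t - m) * ((t - lam) * G t))
      = σ^2 * ∫ t in Ioi lam, C * rexp (-(2*σ^2)⁻¹ * (t - m)^2) from
      ftc_gauss_Ioi hσ m C lam]
  rw [hGdef]
  ring


end SteinHelpers

end
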